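/- (Noiseless exact recovery by the efficient decoder.) Assume the lower RIP bound (1−δ)‖x‖₂² ≤ (1/m)‖M P^{−1/2} x‖₂² for all x ∈ span(U_k), for some δ ∈ (0,1). Let g: ℝ → ℝ be nonnegative and nondecreasing on [0,∞) with g(λ_k) = 0 and g(λ_{k+1}) > 0, and let γ > 0. Then for every x ∈ span(U_k), any minimizer x* over z ∈ ℝ^n of ‖P_Ω^{−1/2}(M z − M x)‖₂² + γ zᵀ g(L) z satisfies x* = x. -/
import Mathlib


open Matrix

/-- Euclidean norm of a finite real vector. -/
noncomputable def norm2 {d : ℕ} (x : Fin d → ℝ) : ℝ := Real.sqrt (∑ j, x j ^ 2)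

/-- The sampling matrix `M ∈ ℝ^{m×n}` associated to fixed indices `ω`. -/
def sampMat {n m : ℕ} (ω : Fin m → Fin n) : Matrix (Fin m) (Fin n) ℝ :=
  Matrix.of fun i j => if j = ω i then 1 else 0

/-- `P^{-1/2}` for `P = diag(p)`. -/
noncomputable def pInvSqrt {n : ℕ} (p : Fin n → ℝ) : Matrix (Fin n) (Fin n) ℝ :=
  Matrix.diagonal fun i => (Real.sqrt (p i))⁻¹

/-- `P_Ω^{-1/2}`, the diagonal matrix with entries `(p ω_i)^{-1/2}`. -/
noncomputable def pOmInvSqrt {n m : ℕ} (p : Fin n → ℝ) (ω : Fin m → Fin n) :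
    Matrix (Fin m) (Fin m) ℝ :=
  Matrix.diagonal fun i => (Real.sqrt (p (ω i)))⁻¹

/-- The matrix of the first `k` columns of `U`. -/
def firstCols {n k : ℕ} (hkn : k ≤ n) (U : Matrix (Fin n) (Fin n) ℝ) :
    Matrix (Fin n) (Fin k) ℝ :=
  Matrix.of fun i j => U i (Fin.castLE hkn j)

/-- `g(L) = U diag(g(λ_1),…,g(λ_n)) Uᵀ` for `L = U diag(λ) Uᵀ`. -/
noncomputable def matFun {n : ℕ} (U : Matrix (Fin n) (Fin n) ℝ) (lam : Fin n → ℝ)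
    (g : ℝ → ℝ) : Matrix (Fin n) (Fin n) ℝ :=
  U * Matrix.diagonal (fun i => g (lam i)) * U.transpose

lemma norm2_sq_eq {d : ℕ} (x : Fin d → ℝ) : norm2 x ^ 2 = ∑ j, x j ^ 2 := by
  rw [norm2, Real.sq_sqrt (Finset.sum_nonneg fun j _ => sq_nonneg _)]

lemma quadform_eq {n : ℕ} (U : Matrix (Fin n) (Fin n) ℝ) (lam : Fin n → ℝ)
    (g : ℝ → ℝ) (z : Fin n → ℝ) :
    z ⬝ᵥ (matFun U lam g).mulVec z
      = ∑ i, g (lam i) * (U.transpose.mulVec z i) ^ 2 := by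
  rw [matFun, ← Matrix.mulVec_mulVec, ← Matrix.mulVec_mulVec,
    Matrix.dotProduct_mulVec, ← Matrix.mulVec_transpose]
  simp only [dotProduct, Matrix.mulVec_diagonal]
  exact Finset.sum_congr rfl fun i _ => by ring

/-- Noiseless exact recovery by the efficient decoder: if `g(λ_k) = 0` and
`g(λ_{k+1}) > 0`, any minimizer of the regularised objective with noiseless
measurements `y = Mx` equals `x`. -/
theorem efficient_decoder_exact_recovery (n k m : ℕ) (hk : 0 < k) (hkn : k < n)
    (hm : 0 < m)
    (U : Matrix (Fin n) (Fin n) ℝ) (hU : U.transpose * U = 1)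
    (lam : Fin n → ℝ) (hmono : Monotone lam) (hnonneg : ∀ i, 0 ≤ lam i)
    (ik ik1 : Fin n) (hik : (ik : ℕ) = k - 1) (hik1 : (ik1 : ℕ) = k)
    (p : Fin n → ℝ) (hp : ∀ i, 0 < p i) (hpsum : ∑ i, p i = 1)
    (ω : Fin m → Fin n) (δ : ℝ) (hδ0 : 0 < δ) (hδ1 : δ < 1)
    (hRIP : ∀ x : Fin n → ℝ,
      (∃ α : Fin k → ℝ, x = (firstCols hkn.le U).mulVec α) →
      (1 - δ) * norm2 x ^ 2 ≤ (1 / m) * norm2 ((sampMat ω * pInvSqrt p).mulVec x) ^ 2)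
    (g : ℝ → ℝ) (hgnn : ∀ t, 0 ≤ t → 0 ≤ g t)
    (hgmono : ∀ s t, 0 ≤ s → s ≤ t → g s ≤ g t)
    (hgk : g (lam ik) = 0) (hgk1 : 0 < g (lam ik1))
    (γ : ℝ) (hγ : 0 < γ)
    (x : Fin n → ℝ) (hx : ∃ α : Fin k → ℝ, x = (firstCols hkn.le U).mulVec α)
    (xstar : Fin n → ℝ)
    (hmin : ∀ z : Fin n → ℝ,
      norm2 ((pOmInvSqrt p ω).mulVec
            ((sampMat ω).mulVec xstar - (sampMat ω).mulVec x)) ^ 2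
          + γ * (xstar ⬝ᵥ (matFun U lam g).mulVec xstar)
        ≤ norm2 ((pOmInvSqrt p ω).mulVec
            ((sampMat ω).mulVec z - (sampMat ω).mulVec x)) ^ 2
          + γ * (z ⬝ᵥ (matFun U lam g).mulVec z)) :
    xstar = x := by
  obtain ⟨α, hxα⟩ := hx
  have hUU : U * U.transpose = 1 := mul_eq_one_comm.mp hU
  -- g vanishes on the first k eigenvalues, positive afterwards
  have hglow : ∀ i : Fin n, (i : ℕ) < k → g (lam i) = 0 := by
    intro i hi
    have hle : i ≤ ik := by
      rw [Fin.le_def, hik]; omega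
    have h1 : g (lam i) ≤ g (lam ik) := hgmono _ _ (hnonneg i) (hmono hle)
    have h2 : 0 ≤ g (lam i) := hgnn _ (hnonneg i)
    linarith [hgk ▸ h1]
  have hghigh : ∀ i : Fin n, k ≤ (i : ℕ) → 0 < g (lam i) := by
    intro i hi
    have hle : ik1 ≤ i := by rw [Fin.le_def, hik1]; exact hi
    have := hgmono _ _ (hnonneg ik1) (hmono hle)
    linarith
  -- coordinates of vectors in the span
  have hcoord : ∀ (β : Fin k → ℝ) (i : Fin n), k ≤ (i : ℕ) →
      U.transpose.mulVec ((firstCols hkn.le U).mulVec β) i = 0 := by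
    intro β i hi
    rw [Matrix.mulVec_mulVec]
    have hentry : ∀ l : Fin k, (U.transpose * firstCols hkn.le U) i l = 0 := by
      intro l
      have : (U.transpose * firstCols hkn.le U) i l
          = (U.transpose * U) i (Fin.castLE hkn.le l) := by
        simp [Matrix.mul_apply, firstCols]
      rw [this, hU]
      have hne : i ≠ Fin.castLE hkn.le l := by
        intro h
        have : (i : ℕ) = (l : ℕ) := by rw [h]; rfl
        omega
      simp [Matrix.one_apply, hne]
    simp [Matrix.mulVec, dotProduct, hentry]
  -- quadratic form vanishes on the span
  have hqspan : ∀ (β : Fin k → ℝ),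
      ((firstCols hkn.le U).mulVec β) ⬝ᵥ
        (matFun U lam g).mulVec ((firstCols hkn.le U).mulVec β) = 0 := by
    intro β
    rw [quadform_eq]
    apply Finset.sum_eq_zero
    intro i _
    rcases lt_or_ge (i : ℕ) k with h | h
    · rw [hglow i h]; ring
    · rw [hcoord β i h]; ring
  -- q(z) is nonnegative
  have hqnn : ∀ z : Fin n → ℝ, 0 ≤ z ⬝ᵥ (matFun U lam g).mulVec z := by
    intro z
    rw [quadform_eq]
    apply Finset.sum_nonneg
    intro i _
    exact mul_nonneg (hgnn _ (hnonneg i)) (sq_nonneg _)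
  -- the objective at z = x is 0
  have hobjx : norm2 ((pOmInvSqrt p ω).mulVec
        ((sampMat ω).mulVec x - (sampMat ω).mulVec x)) ^ 2
      + γ * (x ⬝ᵥ (matFun U lam g).mulVec x) = 0 := by
    rw [sub_self, Matrix.mulVec_zero, hxα, hqspan]
    simp [norm2_sq_eq]
  have hmx := hmin x
  rw [hobjx] at hmx
  have hA : 0 ≤ norm2 ((pOmInvSqrt p ω).mulVec
      ((sampMat ω).mulVec xstar - (sampMat ω).mulVec x)) ^ 2 := sq_nonneg _
  have hq0 : xstar ⬝ᵥ (matFun U lam g).mulVec xstar = 0 := by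
    nlinarith [hqnn xstar]
  have hA0 : norm2 ((pOmInvSqrt p ω).mulVec
      ((sampMat ω).mulVec xstar - (sampMat ω).mulVec x)) ^ 2 = 0 := by
    nlinarith [hqnn xstar]
  -- xstar lies in the span
  set w := U.transpose.mulVec xstar with hw
  have hterm0 : ∀ i : Fin n, k ≤ (i : ℕ) → w i = 0 := by
    intro i hi
    have hsum : ∑ i, g (lam i) * (w i) ^ 2 = 0 := by
      rw [← quadform_eq]; exact hq0
    have hz := (Finset.sum_eq_zero_iff_of_nonneg
      (fun j _ => mul_nonneg (hgnn _ (hnonneg j)) (sq_nonneg _))).mp hsum i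
      (Finset.mem_univ i)
    have hpos := hghigh i hi
    have : (w i) ^ 2 = 0 := by
      by_contra h
      exact h (by nlinarith)
    exact pow_eq_zero_iff (by norm_num) |>.mp this
  have hxstar_span : ∃ β : Fin k → ℝ, xstar = (firstCols hkn.le U).mulVec β := by
    refine ⟨fun j => w (Fin.castLE hkn.le j), ?_⟩
    have h1 : xstar = U.mulVec w := by
      rw [hw, Matrix.mulVec_mulVec, hUU, Matrix.one_mulVec]
    rw [h1]
    funext i
    rw [Matrix.mulVec, Matrix.mulVec, dotProduct, dotProduct]
    rw [show (Finset.univ : Finset (Fin n))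
        = Finset.univ.map ⟨Fin.castLE hkn.le, Fin.castLE_injective hkn.le⟩
          ∪ (Finset.univ \ Finset.univ.map ⟨Fin.castLE hkn.le, Fin.castLE_injective hkn.le⟩)
        from by simp [Finset.union_sdiff_of_subset]]
    rw [Finset.sum_union (Finset.disjoint_sdiff)]
    rw [Finset.sum_map]
    have hzero : ∑ l ∈ Finset.univ \ Finset.univ.map
        ⟨Fin.castLE hkn.le, Fin.castLE_injective hkn.le⟩, U i l * w l = 0 := by
      apply Finset.sum_eq_zero
      intro l hl
      simp only [Finset.mem_sdiff, Finset.mem_map, Finset.mem_univ, true_and,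
        Function.Embedding.coeFn_mk, not_exists] at hl
      have : k ≤ (l : ℕ) := by
        by_contra h
        push_neg at h
        exact hl ⟨l, h⟩ (by ext; simp)
      rw [hterm0 l this, mul_zero]
    rw [hzero, add_zero]
    simp [firstCols]
  -- the difference is in the span
  have hdiff_span : ∃ β : Fin k → ℝ,
      xstar - x = (firstCols hkn.le U).mulVec β := by
    obtain ⟨β, hβ⟩ := hxstar_span
    exact ⟨β - α, by rw [hβ, hxα, Matrix.mulVec_sub]⟩
  -- the two sampled norms agree
  have hMeq : (sampMat ω * pInvSqrt p).mulVec (xstar - x)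
      = (pOmInvSqrt p ω).mulVec ((sampMat ω).mulVec xstar - (sampMat ω).mulVec x) := by
    rw [← Matrix.mulVec_sub]
    funext i
    simp only [Matrix.mulVec, dotProduct, Matrix.mul_apply, sampMat, pInvSqrt,
      pOmInvSqrt, Matrix.diagonal, Matrix.of_apply]
    simp [mul_ite, ite_mul, Finset.sum_ite_eq, Finset.sum_ite_eq', Finset.mul_sum]
  have hrip := hRIP (xstar - x) hdiff_span
  rw [hMeq, hA0, mul_zero] at hrip
  have hn2 : norm2 (xstar - x) ^ 2 = 0 := by nlinarith [sq_nonneg (norm2 (xstar - x))]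
  rw [norm2_sq_eq] at hn2
  have hall := (Finset.sum_eq_zero_iff_of_nonneg
    (fun j _ => sq_nonneg ((xstar - x) j))).mp hn2
  funext i
  have := hall i (Finset.mem_univ i)
  have : (xstar - x) i = 0 := pow_eq_zero_iff (by norm_num) |>.mp this
  simpa [sub_eq_zero] using this
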